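/- Assume the payoff parameters satisfy p1 > p3 > p4 > p2 and p1 + p2 > 2·p3 (stag hunt conditions). Let S₀ be a configuration on the toroidal grid G_{N,M} (N, M ≥ 3) for which there exists (i,j) ∈ V with S₀(i,j) = S₀(i+1,j) = S₀(i,j+1) = S₀(i+1,j+1) = C. Then the singleton {S_C} is reachable from S₀ under the CEG within N + M steps. -/

import Mathlib

open MeasureTheory

namespace EvolGame

/-- A strategy: cooperation `C` or defection `D`. -/
inductive Strat : Type
  | C : Strat
  | D : Strat
  deriving DecidableEq

/-- Node set of the toroidal grid `G_{N,M}`. -/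
abbrev Node (N M : ℕ) := ZMod N × ZMod M

/-- A strategy configuration. -/
abbrev Config (N M : ℕ) := Node N M → Strat

/-- Adjacency on the toroidal grid. -/
def adj {N M : ℕ} (u v : Node N M) : Prop :=
  u - v = (1, 0) ∨ u - v = (-1, 0) ∨ u - v = (0, 1) ∨ u - v = (0, -1)

/-- The (at most four) neighbors of a node. -/
def neighbors {N M : ℕ} (v : Node N M) : Finset (Node N M) :=
  {v + (1, 0), v + (-1, 0), v + (0, 1), v + (0, -1)}

/-- Number of cooperating neighbors of `v` under configuration `S`. -/
def coopCount {N M : ℕ} (S : Config N M) (v : Node N M) : ℕ :=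
  ((neighbors v).filter (fun u => S u = Strat.C)).card

/-- Payoff of node `v` under configuration `S` with payoff parameters `p1,p2,p3,p4`. -/
def payoff (p1 p2 p3 p4 : ℝ) {N M : ℕ} (S : Config N M) (v : Node N M) : ℝ :=
  if S v = Strat.C then
    (coopCount S v : ℝ) * p1 + (4 - (coopCount S v : ℝ)) * p2
  else
    (coopCount S v : ℝ) * p3 + (4 - (coopCount S v : ℝ)) * p4

/-- A control assigns to each node one of its neighbors. -/
def IsControl {N M : ℕ} (c : Node N M → Node N M) : Prop :=
  ∀ v, adj (c v) v

open Classical in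
/-- The controlled update `F(S,c)`. -/
noncomputable def F (p1 p2 p3 p4 : ℝ) {N M : ℕ} (S : Config N M)
    (c : Node N M → Node N M) : Config N M :=
  fun v =>
    if payoff p1 p2 p3 p4 S v < payoff p1 p2 p3 p4 S (c v) then S (c v) else S v

/-- The set `R(S)` of configurations reachable from `S` in one imitation step. -/
def Rset (p1 p2 p3 p4 : ℝ) {N M : ℕ} (S : Config N M) : Set (Config N M) :=
  {S' | ∀ v, S' v = S v ∨
    ∃ u, adj u v ∧ S' v = S u ∧ payoff p1 p2 p3 p4 S v < payoff p1 p2 p3 p4 S u}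

/-- `Ω*`: adjacent nodes with different strategies have equal payoffs. -/
def OmegaStar (p1 p2 p3 p4 : ℝ) (N M : ℕ) : Set (Config N M) :=
  {S | ∀ u v, adj u v → S u ≠ S v →
    payoff p1 p2 p3 p4 S u = payoff p1 p2 p3 p4 S v}

/-- Controlled trajectory of the CEG. -/
noncomputable def traj (p1 p2 p3 p4 : ℝ) {N M : ℕ} (S0 : Config N M)
    (c : ℕ → Node N M → Node N M) : ℕ → Config N M
  | 0 => S0
  | t + 1 => F p1 p2 p3 p4 (traj p1 p2 p3 p4 S0 c t) (c t)

/-- `A` is reachable from `S0` under the CEG within `T` steps. -/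
def ReachableWithin (p1 p2 p3 p4 : ℝ) {N M : ℕ} (A : Set (Config N M))
    (S0 : Config N M) (T : ℕ) : Prop :=
  ∃ t ≤ T, ∃ c : ℕ → Node N M → Node N M,
    (∀ s, IsControl (c s)) ∧ traj p1 p2 p3 p4 S0 c t ∈ A

/-- The discrete σ-algebra on the finite configuration space. -/
instance {N M : ℕ} : MeasurableSpace (Config N M) := ⊤

/-- `μ` is the law of the time-homogeneous Markov chain with kernel `κ` started
at `S0`, characterized by its finite-dimensional (cylinder) distributions. -/
def IsChainLaw {N M : ℕ} (κ : Config N M → PMF (Config N M)) (S0 : Config N M)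
    (μ : Measure (ℕ → Config N M)) : Prop :=
  IsProbabilityMeasure μ ∧
  ∀ (t : ℕ) (s : ℕ → Config N M), s 0 = S0 →
    μ {ω | ∀ i ≤ t, ω i = s i} = ∏ i ∈ Finset.range t, κ (s i) (s (i + 1))

/-- An admissible imitation kernel with margin `ε`. -/
def IsAdmissible (p1 p2 p3 p4 : ℝ) {N M : ℕ} (ε : ℝ)
    (κ : Config N M → PMF (Config N M)) : Prop :=
  (∀ (S : Config N M) (c : Node N M → Node N M), IsControl c →
      ENNReal.ofReal ε ≤ κ S (F p1 p2 p3 p4 S c)) ∧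
  (∀ S : Config N M, ∑' S' : Rset p1 p2 p3 p4 S, κ S (S' : Config N M) = 1)

open Classical in
/-- The `W`-frozen controlled update. -/
noncomputable def FW (p1 p2 p3 p4 : ℝ) {N M : ℕ} (W : Set (Node N M))
    (S : Config N M) (c : Node N M → Node N M) : Config N M :=
  fun v => if v ∈ W then S v else F p1 p2 p3 p4 S c v

/-- The `W`-frozen one-step reach set `R_W(S)`. -/
def RsetW (p1 p2 p3 p4 : ℝ) {N M : ℕ} (W : Set (Node N M)) (S : Config N M) :
    Set (Config N M) :=
  {S' | (∀ v ∈ W, S' v = S v) ∧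
    ∀ v ∉ W, S' v = S v ∨
      ∃ u, adj u v ∧ S' v = S u ∧ payoff p1 p2 p3 p4 S v < payoff p1 p2 p3 p4 S u}

/-- Controlled trajectory of the `W`-frozen CEG. -/
noncomputable def trajW (p1 p2 p3 p4 : ℝ) {N M : ℕ} (W : Set (Node N M))
    (S0 : Config N M) (c : ℕ → Node N M → Node N M) : ℕ → Config N M
  | 0 => S0
  | t + 1 => FW p1 p2 p3 p4 W (trajW p1 p2 p3 p4 W S0 c t) (c t)

/-- `A` is reachable from `S0` under the `W`-frozen CEG within `T` steps. -/
def ReachableWithinW (p1 p2 p3 p4 : ℝ) {N M : ℕ} (W : Set (Node N M))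
    (A : Set (Config N M)) (S0 : Config N M) (T : ℕ) : Prop :=
  ∃ t ≤ T, ∃ c : ℕ → Node N M → Node N M,
    (∀ s, IsControl (c s)) ∧ trajW p1 p2 p3 p4 W S0 c t ∈ A

/-- A `W`-frozen admissible imitation kernel with margin `ε`. -/
def IsAdmissibleW (p1 p2 p3 p4 : ℝ) {N M : ℕ} (W : Set (Node N M)) (ε : ℝ)
    (κ : Config N M → PMF (Config N M)) : Prop :=
  (∀ (S : Config N M) (c : Node N M → Node N M), IsControl c →
      ENNReal.ofReal ε ≤ κ S (FW p1 p2 p3 p4 W S c)) ∧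
  (∀ S : Config N M, ∑' S' : RsetW p1 p2 p3 p4 W S, κ S (S' : Config N M) = 1)


variable {N M : ℕ}

lemma adj_of_mem_neighbors {u v : Node N M} (h : u ∈ neighbors v) : adj u v := by
  simp only [neighbors, Finset.mem_insert, Finset.mem_singleton] at h
  rcases h with h|h|h|h <;> subst h <;> simp [adj]

lemma mem_neighbors_add (v : Node N M) (d : Node N M)
    (hd : d = (1,0) ∨ d = (-1,0) ∨ d = (0,1) ∨ d = (0,-1)) : v + d ∈ neighbors v := by
  rcases hd with h|h|h|h <;> subst h <;> simp [neighbors]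

lemma card_neighbors_le (v : Node N M) : (neighbors v).card ≤ 4 := by
  unfold neighbors
  refine le_trans (Finset.card_insert_le _ _) ?_
  refine le_trans (Nat.add_le_add_right (Finset.card_insert_le _ _) 1) ?_
  refine le_trans (Nat.add_le_add_right (Nat.add_le_add_right (Finset.card_insert_le _ _) 1) 1) ?_
  simp

lemma coopCount_le_four (S : Config N M) (v : Node N M) : coopCount S v ≤ 4 :=
  le_trans (Finset.card_filter_le _ _) (card_neighbors_le v)

lemma two_le_coopCount (S : Config N M) (u x y : Node N M) (hxy : x ≠ y)
    (hx : x ∈ neighbors u) (hy : y ∈ neighbors u)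
    (hcx : S x = Strat.C) (hcy : S y = Strat.C) : 2 ≤ coopCount S u := by
  have hsub : ({x, y} : Finset (Node N M)) ⊆ (neighbors u).filter (fun w => S w = Strat.C) := by
    intro z hz
    simp only [Finset.mem_insert, Finset.mem_singleton] at hz
    rcases hz with h|h <;> subst h <;> exact Finset.mem_filter.2 ⟨by assumption, by assumption⟩
  calc 2 = ({x, y} : Finset (Node N M)).card := (Finset.card_pair hxy).symm
    _ ≤ _ := Finset.card_le_card hsub

lemma payoff_lt {p1 p2 p3 p4 : ℝ} (h13 : p1 > p3) (h34 : p3 > p4) (h42 : p4 > p2)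
    (hsum : p1 + p2 > 2 * p3) (S : Config N M) (u v : Node N M)
    (hu : S u = Strat.C) (hv : S v = Strat.D) (hcu : 2 ≤ coopCount S u) :
    payoff p1 p2 p3 p4 S v < payoff p1 p2 p3 p4 S u := by
  have h4u := coopCount_le_four S u
  have h4v := coopCount_le_four S v
  unfold payoff
  rw [hu, hv, if_pos rfl, if_neg (by simp)]
  have hk2 : (2:ℝ) ≤ (coopCount S u : ℝ) := by exact_mod_cast hcu
  have hk4 : (coopCount S u : ℝ) ≤ 4 := by exact_mod_cast h4u
  have hm0 : (0:ℝ) ≤ (coopCount S v : ℝ) := by positivity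
  have hm4 : (coopCount S v : ℝ) ≤ 4 := by exact_mod_cast h4v
  nlinarith [mul_nonneg (by linarith : (0:ℝ) ≤ (coopCount S u : ℝ) - 2) (by linarith : (0:ℝ) ≤ p1 - p2),
    mul_nonneg (by linarith : (0:ℝ) ≤ 4 - (coopCount S v : ℝ)) (by linarith : (0:ℝ) ≤ p3 - p4)]

lemma reachable_step {p1 p2 p3 p4 : ℝ} {A : Set (Config N M)} {S : Config N M}
    {c0 : Node N M → Node N M} (hc0 : IsControl c0) {T : ℕ}
    (h : ReachableWithin p1 p2 p3 p4 A (F p1 p2 p3 p4 S c0) T) :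
    ReachableWithin p1 p2 p3 p4 A S (T + 1) := by
  obtain ⟨t, ht, c, hc, hmem⟩ := h
  refine ⟨t + 1, by omega, fun n => if n = 0 then c0 else c (n - 1), ?_, ?_⟩
  · intro s; dsimp only; split <;> [exact hc0; exact hc _]
  · have key : ∀ s, traj p1 p2 p3 p4 S (fun n => if n = 0 then c0 else c (n - 1)) (s + 1)
        = traj p1 p2 p3 p4 (F p1 p2 p3 p4 S c0) c s := by
      intro s
      induction s with
      | zero => simp [traj]
      | succ s ih =>
          show F p1 p2 p3 p4 (traj p1 p2 p3 p4 S (fun n => if n = 0 then c0 else c (n - 1)) (s+1))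
              (if s + 1 = 0 then c0 else c (s + 1 - 1)) = _
          rw [ih]
          simp [traj]
    rw [key]; exact hmem

lemma grow_col (hN : 3 ≤ N) (hM : 3 ≤ M) {p1 p2 p3 p4 : ℝ}
    (h13 : p1 > p3) (h34 : p3 > p4) (h42 : p4 > p2) (hsum : p1 + p2 > 2 * p3)
    (v0 : Node N M) (a b : ℕ) (ha : 2 ≤ a) (hb : 2 ≤ b) (hbM : b < M)
    (S : Config N M)
    (hS : ∀ k l : ℕ, k < a → l < b → S (v0 + ((k : ZMod N), (l : ZMod M))) = Strat.C) :
    ∃ c, IsControl c ∧ ∀ k l : ℕ, k < a → l < b + 1 →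
      F p1 p2 p3 p4 S c (v0 + ((k : ZMod N), (l : ZMod M))) = Strat.C := by
  classical
  haveI : NeZero N := ⟨by omega⟩
  haveI : NeZero M := ⟨by omega⟩
  haveI : Fact (1 < N) := ⟨by omega⟩
  haveI : Fact (1 < M) := ⟨by omega⟩
  -- every rectangle node has a cooperating neighbor inside the rectangle
  have hCnb : ∀ k l : ℕ, k < a → l < b →
      ∃ u, u ∈ neighbors (v0 + ((k : ZMod N), (l : ZMod M))) ∧ S u = Strat.C := by
    intro k l hk hl
    by_cases hk1 : k + 1 < a
    · refine ⟨v0 + ((k : ZMod N), (l : ZMod M)) + ((1 : ZMod N), (0 : ZMod M)),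
        mem_neighbors_add _ _ (Or.inl rfl), ?_⟩
      have e : v0 + ((k : ZMod N), (l : ZMod M)) + ((1 : ZMod N), (0 : ZMod M))
          = v0 + (((k+1 : ℕ) : ZMod N), (l : ZMod M)) := by
        push_cast; simp [Prod.ext_iff]; ring
      rw [e]; exact hS _ _ hk1 hl
    · have hk0 : 1 ≤ k := by omega
      refine ⟨v0 + ((k : ZMod N), (l : ZMod M)) + ((-1 : ZMod N), (0 : ZMod M)),
        mem_neighbors_add _ _ (Or.inr (Or.inl rfl)), ?_⟩
      have e : v0 + ((k : ZMod N), (l : ZMod M)) + ((-1 : ZMod N), (0 : ZMod M))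
          = v0 + (((k-1 : ℕ) : ZMod N), (l : ZMod M)) := by
        push_cast [Nat.cast_sub hk0]; simp [Prod.ext_iff]; ring
      rw [e]; exact hS _ _ (by omega) hl
  set c : Node N M → Node N M := fun v =>
    if _ : ∃ k, k < a ∧ v = v0 + ((k : ZMod N), ((b : ℕ) : ZMod M)) then v + ((0:ZMod N), (-1:ZMod M))
    else if h2 : ∃ u, u ∈ neighbors v ∧ S u = Strat.C then h2.choose
    else v + ((1:ZMod N), (0:ZMod M)) with hcdef
  refine ⟨c, ?_, ?_⟩
  · intro v
    rw [hcdef]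
    dsimp only
    split_ifs with h1 h2
    · exact Or.inr (Or.inr (Or.inr (add_sub_cancel_left v _)))
    · exact adj_of_mem_neighbors h2.choose_spec.1
    · exact Or.inl (add_sub_cancel_left v _)
  · intro k l hk hl
    set w : Node N M := v0 + ((k : ZMod N), (l : ZMod M)) with hwdef
    rcases lt_or_eq_of_le (Nat.lt_succ_iff.mp hl) with hlb | hlb
    · -- old rectangle node
      have hwC : S w = Strat.C := hS k l hk hlb
      have hnc : ¬ ∃ k', k' < a ∧ w = v0 + ((k' : ZMod N), ((b : ℕ) : ZMod M)) := by
        rintro ⟨k', _, he⟩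
        rw [hwdef] at he
        have h2 := congrArg Prod.snd (add_left_cancel he)
        simp only at h2
        have : l = b := by
          have := congrArg ZMod.val h2
          rwa [ZMod.val_cast_of_lt (by omega), ZMod.val_cast_of_lt hbM] at this
        omega
      have hpos := hCnb k l hk hlb
      have hcw : S (c w) = Strat.C := by
        rw [hcdef]; dsimp only; rw [dif_neg hnc, dif_pos hpos]
        exact hpos.choose_spec.2
      unfold F
      split <;> [exact hcw; exact hwC]
    · -- new column node
      subst l
      have hpos1 : ∃ k', k' < a ∧ w = v0 + ((k' : ZMod N), ((b : ℕ) : ZMod M)) := ⟨k, hk, rfl⟩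
      have hcweq : c w = v0 + ((k : ZMod N), (((b-1 : ℕ)) : ZMod M)) := by
        rw [hcdef]; dsimp only; rw [dif_pos hpos1, hwdef]
        push_cast [Nat.cast_sub (by omega : 1 ≤ b)]
        simp [Prod.ext_iff]; ring
      set u : Node N M := v0 + ((k : ZMod N), (((b-1 : ℕ)) : ZMod M)) with hudef
      have hcwC : S (c w) = Strat.C := by rw [hcweq]; exact hS k (b-1) hk (by omega)
      -- u has two cooperating neighbors
      have hn1eq : u + ((0:ZMod N), (-1:ZMod M)) = v0 + ((k : ZMod N), ((b-2 : ℕ) : ZMod M)) := by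
        rw [hudef]
        push_cast [Nat.cast_sub (by omega : 1 ≤ b), Nat.cast_sub (by omega : 2 ≤ b)]
        simp [Prod.ext_iff]; ring
      have hn1C : S (u + ((0:ZMod N), (-1:ZMod M))) = Strat.C := by
        rw [hn1eq]; exact hS k (b-2) hk (by omega)
      have hcoop : 2 ≤ coopCount S u := by
        by_cases hk1 : k + 1 < a
        · have hn2eq : u + ((1:ZMod N), (0:ZMod M)) = v0 + (((k+1:ℕ) : ZMod N), ((b-1 : ℕ) : ZMod M)) := by
            rw [hudef]; push_cast; simp [Prod.ext_iff]; ring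
          have hn2C : S (u + ((1:ZMod N), (0:ZMod M))) = Strat.C := by
            rw [hn2eq]; exact hS (k+1) (b-1) hk1 (by omega)
          refine two_le_coopCount S u _ _ ?_
            (mem_neighbors_add _ _ (Or.inr (Or.inr (Or.inr rfl))))
            (mem_neighbors_add _ _ (Or.inl rfl)) hn1C hn2C
          intro h
          have h1 := congrArg Prod.fst h
          simp at h1
        · have hk0 : 1 ≤ k := by omega
          have hn2eq : u + ((-1:ZMod N), (0:ZMod M)) = v0 + (((k-1:ℕ) : ZMod N), ((b-1 : ℕ) : ZMod M)) := by
            rw [hudef]; push_cast [Nat.cast_sub hk0]; simp [Prod.ext_iff]; ring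
          have hn2C : S (u + ((-1:ZMod N), (0:ZMod M))) = Strat.C := by
            rw [hn2eq]; exact hS (k-1) (b-1) (by omega) (by omega)
          refine two_le_coopCount S u _ _ ?_
            (mem_neighbors_add _ _ (Or.inr (Or.inr (Or.inr rfl))))
            (mem_neighbors_add _ _ (Or.inr (Or.inl rfl))) hn1C hn2C
          intro h
          have h1 := congrArg Prod.snd h
          simp at h1
      have hcwC' : S (c w) = Strat.C := hcwC
      have hcoopcw : 2 ≤ coopCount S (c w) := by rw [hcweq]; exact hcoop
      cases hw : S w with
      | C => unfold F; split <;> [exact hcwC'; exact hw]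
      | D =>
          have hlt := payoff_lt h13 h34 h42 hsum S (c w) w hcwC' hw hcoopcw
          unfold F
          rw [if_pos hlt]
          exact hcwC'


lemma grow_row (hN : 3 ≤ N) (hM : 3 ≤ M) {p1 p2 p3 p4 : ℝ}
    (h13 : p1 > p3) (h34 : p3 > p4) (h42 : p4 > p2) (hsum : p1 + p2 > 2 * p3)
    (v0 : Node N M) (a b : ℕ) (ha : 2 ≤ a) (hb : 2 ≤ b) (haN : a < N)
    (S : Config N M)
    (hS : ∀ k l : ℕ, k < a → l < b → S (v0 + ((k : ZMod N), (l : ZMod M))) = Strat.C) :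
    ∃ c, IsControl c ∧ ∀ k l : ℕ, k < a + 1 → l < b →
      F p1 p2 p3 p4 S c (v0 + ((k : ZMod N), (l : ZMod M))) = Strat.C := by
  classical
  haveI : NeZero N := ⟨by omega⟩
  haveI : NeZero M := ⟨by omega⟩
  haveI : Fact (1 < N) := ⟨by omega⟩
  haveI : Fact (1 < M) := ⟨by omega⟩
  have hCnb : ∀ k l : ℕ, k < a → l < b →
      ∃ u, u ∈ neighbors (v0 + ((k : ZMod N), (l : ZMod M))) ∧ S u = Strat.C := by
    intro k l hk hl
    by_cases hl1 : l + 1 < b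
    · refine ⟨v0 + ((k : ZMod N), (l : ZMod M)) + ((0 : ZMod N), (1 : ZMod M)),
        mem_neighbors_add _ _ (Or.inr (Or.inr (Or.inl rfl))), ?_⟩
      have e : v0 + ((k : ZMod N), (l : ZMod M)) + ((0 : ZMod N), (1 : ZMod M))
          = v0 + ((k : ZMod N), ((l+1 : ℕ) : ZMod M)) := by
        push_cast; simp [Prod.ext_iff]; ring
      rw [e]; exact hS _ _ hk hl1
    · have hl0 : 1 ≤ l := by omega
      refine ⟨v0 + ((k : ZMod N), (l : ZMod M)) + ((0 : ZMod N), (-1 : ZMod M)),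
        mem_neighbors_add _ _ (Or.inr (Or.inr (Or.inr rfl))), ?_⟩
      have e : v0 + ((k : ZMod N), (l : ZMod M)) + ((0 : ZMod N), (-1 : ZMod M))
          = v0 + ((k : ZMod N), ((l-1 : ℕ) : ZMod M)) := by
        push_cast [Nat.cast_sub hl0]; simp [Prod.ext_iff]; ring
      rw [e]; exact hS _ _ hk (by omega)
  set c : Node N M → Node N M := fun v =>
    if _ : ∃ l, l < b ∧ v = v0 + (((a : ℕ) : ZMod N), (l : ZMod M)) then v + ((-1:ZMod N), (0:ZMod M))
    else if h2 : ∃ u, u ∈ neighbors v ∧ S u = Strat.C then h2.choose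
    else v + ((1:ZMod N), (0:ZMod M)) with hcdef
  refine ⟨c, ?_, ?_⟩
  · intro v
    rw [hcdef]
    dsimp only
    split_ifs with h1 h2
    · exact Or.inr (Or.inl (add_sub_cancel_left v _))
    · exact adj_of_mem_neighbors h2.choose_spec.1
    · exact Or.inl (add_sub_cancel_left v _)
  · intro k l hk hl
    set w : Node N M := v0 + ((k : ZMod N), (l : ZMod M)) with hwdef
    rcases lt_or_eq_of_le (Nat.lt_succ_iff.mp hk) with hka | hka
    · -- old rectangle node
      have hwC : S w = Strat.C := hS k l hka hl
      have hnc : ¬ ∃ l', l' < b ∧ w = v0 + (((a : ℕ) : ZMod N), (l' : ZMod M)) := by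
        rintro ⟨l', _, he⟩
        rw [hwdef] at he
        have h2 := congrArg Prod.fst (add_left_cancel he)
        simp only at h2
        have : k = a := by
          have := congrArg ZMod.val h2
          rwa [ZMod.val_cast_of_lt (by omega), ZMod.val_cast_of_lt haN] at this
        omega
      have hpos := hCnb k l hka hl
      have hcw : S (c w) = Strat.C := by
        rw [hcdef]; dsimp only; rw [dif_neg hnc, dif_pos hpos]
        exact hpos.choose_spec.2
      unfold F
      split <;> [exact hcw; exact hwC]
    · -- new row node
      subst k
      have hpos1 : ∃ l', l' < b ∧ w = v0 + (((a : ℕ) : ZMod N), (l' : ZMod M)) := ⟨l, hl, rfl⟩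
      have hcweq : c w = v0 + (((a-1 : ℕ) : ZMod N), (l : ZMod M)) := by
        rw [hcdef]; dsimp only; rw [dif_pos hpos1, hwdef]
        push_cast [Nat.cast_sub (by omega : 1 ≤ a)]
        simp [Prod.ext_iff]; ring
      set u : Node N M := v0 + (((a-1 : ℕ) : ZMod N), (l : ZMod M)) with hudef
      have hcwC : S (c w) = Strat.C := by rw [hcweq]; exact hS (a-1) l (by omega) hl
      have hn1eq : u + ((-1:ZMod N), (0:ZMod M)) = v0 + (((a-2 : ℕ) : ZMod N), (l : ZMod M)) := by
        rw [hudef]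
        push_cast [Nat.cast_sub (by omega : 1 ≤ a), Nat.cast_sub (by omega : 2 ≤ a)]
        simp [Prod.ext_iff]; ring
      have hn1C : S (u + ((-1:ZMod N), (0:ZMod M))) = Strat.C := by
        rw [hn1eq]; exact hS (a-2) l (by omega) hl
      have hcoop : 2 ≤ coopCount S u := by
        by_cases hl1 : l + 1 < b
        · have hn2eq : u + ((0:ZMod N), (1:ZMod M)) = v0 + (((a-1:ℕ) : ZMod N), ((l+1 : ℕ) : ZMod M)) := by
            rw [hudef]; push_cast; simp [Prod.ext_iff]; ring
          have hn2C : S (u + ((0:ZMod N), (1:ZMod M))) = Strat.C := by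
            rw [hn2eq]; exact hS (a-1) (l+1) (by omega) hl1
          refine two_le_coopCount S u _ _ ?_
            (mem_neighbors_add _ _ (Or.inr (Or.inl rfl)))
            (mem_neighbors_add _ _ (Or.inr (Or.inr (Or.inl rfl)))) hn1C hn2C
          intro h
          have h1 := congrArg Prod.snd h
          simp at h1
        · have hl0 : 1 ≤ l := by omega
          have hn2eq : u + ((0:ZMod N), (-1:ZMod M)) = v0 + (((a-1:ℕ) : ZMod N), ((l-1 : ℕ) : ZMod M)) := by
            rw [hudef]; push_cast [Nat.cast_sub hl0]; simp [Prod.ext_iff]; ring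
          have hn2C : S (u + ((0:ZMod N), (-1:ZMod M))) = Strat.C := by
            rw [hn2eq]; exact hS (a-1) (l-1) (by omega) (by omega)
          refine two_le_coopCount S u _ _ ?_
            (mem_neighbors_add _ _ (Or.inr (Or.inl rfl)))
            (mem_neighbors_add _ _ (Or.inr (Or.inr (Or.inr rfl)))) hn1C hn2C
          intro h
          have h1 := congrArg Prod.fst h
          simp at h1
      have hcwC' : S (c w) = Strat.C := hcwC
      have hcoopcw : 2 ≤ coopCount S (c w) := by rw [hcweq]; exact hcoop
      cases hw : S w with
      | C => unfold F; split <;> [exact hcwC'; exact hw]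
      | D =>
          have hlt := payoff_lt h13 h34 h42 hsum S (c w) w hcwC' hw hcoopcw
          unfold F
          rw [if_pos hlt]
          exact hcwC'


lemma reach_aux (hN : 3 ≤ N) (hM : 3 ≤ M) {p1 p2 p3 p4 : ℝ}
    (h13 : p1 > p3) (h34 : p3 > p4) (h42 : p4 > p2) (hsum : p1 + p2 > 2 * p3)
    (v0 : Node N M) :
    ∀ d a b (S : Config N M), 2 ≤ a → a ≤ N → 2 ≤ b → b ≤ M →
      (N - a) + (M - b) ≤ d →
      (∀ k l : ℕ, k < a → l < b → S (v0 + ((k : ZMod N), (l : ZMod M))) = Strat.C) →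
      ReachableWithin p1 p2 p3 p4 ({fun _ => Strat.C} : Set (Config N M)) S d := by
  haveI : NeZero N := ⟨by omega⟩
  haveI : NeZero M := ⟨by omega⟩
  have hfull : ∀ (S : Config N M),
      (∀ k l : ℕ, k < N → l < M → S (v0 + ((k : ZMod N), (l : ZMod M))) = Strat.C) →
      S = fun _ => Strat.C := by
    intro S hS
    funext w
    have hk := ZMod.val_lt (w.1 - v0.1)
    have hl := ZMod.val_lt (w.2 - v0.2)
    have := hS (w.1 - v0.1).val (w.2 - v0.2).val hk hl
    have e : v0 + ((((w.1 - v0.1).val : ℕ) : ZMod N), (((w.2 - v0.2).val : ℕ) : ZMod M)) = w := by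
      simp [Prod.ext_iff, ZMod.natCast_val, ZMod.cast_id]
    rwa [e] at this
  intro d
  induction d with
  | zero =>
      intro a b S ha haN hb hbM hd hS
      have haN' : a = N := by omega
      have hbM' : b = M := by omega
      subst a; subst b
      refine ⟨0, le_refl _, fun _ v => v + ((1:ZMod N), (0:ZMod M)), ?_, ?_⟩
      · intro s v; exact Or.inl (add_sub_cancel_left v _)
      · show S ∈ _
        rw [hfull S hS]; rfl
  | succ d ih =>
      intro a b S ha haN hb hbM hd hS
      by_cases hbM2 : b < M
      · obtain ⟨c0, hc0, hF⟩ := grow_col hN hM h13 h34 h42 hsum v0 a b ha hb hbM2 S hS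
        exact reachable_step hc0 (ih a (b+1) _ ha haN (by omega) (by omega) (by omega) hF)
      · by_cases haN2 : a < N
        · obtain ⟨c0, hc0, hF⟩ := grow_row hN hM h13 h34 h42 hsum v0 a b ha hb haN2 S hS
          exact reachable_step hc0 (ih (a+1) b _ (by omega) (by omega) hb hbM (by omega) hF)
        · have haN' : a = N := by omega
          have hbM' : b = M := by omega
          subst a; subst b
          refine ⟨0, by omega, fun _ v => v + ((1:ZMod N), (0:ZMod M)), ?_, ?_⟩
          · intro s v; exact Or.inl (add_sub_cancel_left v _)
          · show S ∈ _
            rw [hfull S hS]; rfl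

/-- under the stag hunt conditions, if the initial configuration
contains a square of four cooperators, the all-cooperation configuration is
reachable under the CEG within `N + M` steps. -/
theorem staghunt_reachable_coop {N M : ℕ} (hN : 3 ≤ N) (hM : 3 ≤ M)
    (p1 p2 p3 p4 : ℝ) (h13 : p1 > p3) (h34 : p3 > p4) (h42 : p4 > p2)
    (hsum : p1 + p2 > 2 * p3)
    (S0 : Config N M)
    (hsq : ∃ v : Node N M, S0 v = Strat.C ∧ S0 (v + (1, 0)) = Strat.C ∧
      S0 (v + (0, 1)) = Strat.C ∧ S0 (v + (1, 1)) = Strat.C) :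
    ReachableWithin p1 p2 p3 p4 ({fun _ => Strat.C} : Set (Config N M)) S0 (N + M) := by
  obtain ⟨v, h00, h10, h01, h11⟩ := hsq
  have hS : ∀ k l : ℕ, k < 2 → l < 2 → S0 (v + ((k : ZMod N), (l : ZMod M))) = Strat.C := by
    intro k l hk hl
    interval_cases k <;> interval_cases l <;> push_cast <;>
      first
        | simpa [Prod.mk_zero_zero] using h00
        | simpa using h01
        | simpa using h10
        | simpa using h11
  exact reach_aux hN hM h13 h34 h42 hsum v (N + M) 2 2 S0 (le_refl _) (by omega)
    (le_refl _) (by omega) (by omega) hS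

end EvolGame
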